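/- When for a PMA all populations with positive minimum targets are pairwise disjoint, the choice function given by Algorithm 1 (uniform promotion for candidates helping any unmet minimum target) coincides with the choice function given by Algorithm 2 (promotion graded by the number of unmet minimum targets a candidate helps): both algorithms choose the same subset from every candidate set. -/

import Mathlib

/-! Shared definitions: PMA choice functions (greedy max-quota, Algorithm 1, Algorithm 2),
laminarity, deferred acceptance, and stability notions. -/

namespace PMA

variable {α : Type*} [DecidableEq α]

/-- A population constraint: a set of candidates together with a bound
(a maximum quota or a minimum target, depending on context). -/
abbrev Pop (α : Type*) := Finset α × ℕ

/-- A set `S` respects all maximum quotas. -/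
def Feasible (maxQ : List (Pop α)) (S : Finset α) : Prop :=
  ∀ q ∈ maxQ, (S ∩ q.1).card ≤ q.2

instance (maxQ : List (Pop α)) (S : Finset α) : Decidable (Feasible maxQ S) :=
  List.decidableBAll _ _

/-- Greedy pass: traverse candidates in the given order, accepting each candidate
whose addition violates no maximum quota. -/
def pass2 (maxQ : List (Pop α)) : List α → Finset α → Finset α
  | [], S => S
  | c :: rest, S =>
      if Feasible maxQ (insert c S) then pass2 maxQ rest (insert c S)
      else pass2 maxQ rest S

/-- Candidate `c` belongs to some population whose minimum target is not yet met by `S`. -/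
def HelpsMin (minT : List (Pop α)) (S : Finset α) (c : α) : Prop :=
  ∃ p ∈ minT, c ∈ p.1 ∧ (S ∩ p.1).card < p.2

instance (minT : List (Pop α)) (S : Finset α) (c : α) : Decidable (HelpsMin minT S c) :=
  List.decidableBEx _ _

/-- First pass of Algorithm 1: traverse candidates in order, accepting (subject to
maximum quotas) those who help meet some unmet minimum target. -/
def pass1 (maxQ minT : List (Pop α)) : List α → Finset α → Finset α
  | [], S => S
  | c :: rest, S =>
      if HelpsMin minT S c ∧ Feasible maxQ (insert c S) then
        pass1 maxQ minT rest (insert c S)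
      else pass1 maxQ minT rest S

/-- Algorithm 1 choice function: two passes over the candidates of `C`,
in the priority order given by the list `order`. -/
def choice1 (maxQ minT : List (Pop α)) (order : List α) (C : Finset α) : Finset α :=
  pass2 maxQ (order.filter fun c => decide (c ∈ C))
    (pass1 maxQ minT (order.filter fun c => decide (c ∈ C)) ∅)

/-- The greedy max-quota choice function (no minimum targets), with the priority order
given by the linear order on candidates. -/
def greedy [LinearOrder α] (maxQ : List (Pop α)) (C : Finset α) : Finset α :=
  pass2 maxQ (C.sort (· ≤ ·)) ∅

/-- The greedy max-quota choice function with an explicit priority list. -/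
def greedyL (maxQ : List (Pop α)) (order : List α) (C : Finset α) : Finset α :=
  pass2 maxQ (order.filter fun c => decide (c ∈ C)) ∅

/-- The number of populations with a minimum target not yet met by `S` to which `c` belongs. -/
def nUnmet (minT : List (Pop α)) (S : Finset α) (c : α) : ℕ :=
  (minT.filter fun p => decide (c ∈ p.1 ∧ (S ∩ p.1).card < p.2)).length

/-- The candidates of `R` maximizing the number of unmet minimum targets they help. -/
def bestSet [LinearOrder α] (minT : List (Pop α)) (S R : Finset α) : Finset α :=
  R.filter fun c => ∀ d ∈ R, nUnmet minT S d ≤ nUnmet minT S c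

lemma bestSet_nonempty [LinearOrder α] (minT : List (Pop α)) (S : Finset α) {R : Finset α}
    (hR : R.Nonempty) : (bestSet minT S R).Nonempty := by
  obtain ⟨b, hb, hmax⟩ := R.exists_max_image (nUnmet minT S) hR
  exact ⟨b, Finset.mem_filter.mpr ⟨hb, hmax⟩⟩

/-- The next candidate processed by Algorithm 2: among `R`, maximize the number of unmet
minimum targets helped, breaking ties by the priority order. -/
def pick [LinearOrder α] (minT : List (Pop α)) (S : Finset α) {R : Finset α}
    (hR : R.Nonempty) : α :=
  (bestSet minT S R).min' (bestSet_nonempty minT S hR)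

lemma pick_mem [LinearOrder α] (minT : List (Pop α)) (S : Finset α) {R : Finset α}
    (hR : R.Nonempty) : pick minT S hR ∈ R :=
  Finset.filter_subset _ _ (Finset.min'_mem _ _)

/-- Main loop of Algorithm 2: `R` is the set of unprocessed candidates, `S` the chosen set. -/
def choice2Go [LinearOrder α] (maxQ minT : List (Pop α)) (R S : Finset α) : Finset α :=
  if hR : R.Nonempty then
    choice2Go maxQ minT (R.erase (pick minT S hR))
      (if Feasible maxQ (insert (pick minT S hR) S) then insert (pick minT S hR) S else S)
  else S
  termination_by R.card
  decreasing_by exact Finset.card_erase_lt_of_mem (pick_mem minT S hR)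

/-- Algorithm 2 choice function. -/
def choice2 [LinearOrder α] (maxQ minT : List (Pop α)) (C : Finset α) : Finset α :=
  choice2Go maxQ minT C ∅

/-- A family of populations is laminar: any two are disjoint or nested. -/
def Laminar (pops : List (Pop α)) : Prop :=
  ∀ p ∈ pops, ∀ q ∈ pops, Disjoint p.1 q.1 ∨ p.1 ⊆ q.1 ∨ q.1 ⊆ p.1

/-- The sets of the populations carrying a positive minimum target. -/
def minTargetSets (minT : List (Pop α)) : Set (Finset α) :=
  {P | ∃ t, (P, t) ∈ minT ∧ 0 < t}

/-- A family of sets is a union of pairwise-disjoint chains: it can be partitioned into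
subfamilies, each totally ordered by inclusion, with sets in different subfamilies disjoint. -/
def UnionOfDisjointChains (F : Set (Finset α)) : Prop :=
  ∃ Part : Set (Set (Finset α)), ⋃₀ Part = F ∧ (∀ c ∈ Part, IsChain (· ⊆ ·) c) ∧
    Part.Pairwise fun c c' => ∀ P ∈ c, ∀ Q ∈ c', Disjoint P Q

section DA

variable {β : Type*} [Fintype α] [DecidableEq β]

/-- The institution to which candidate `c` currently applies: the most-preferred institution
on her list that has not yet rejected her (`none` if her list is exhausted). -/
def applyTo (prefs : α → List β) (rej : α → Finset β) (c : α) : Option β :=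
  (prefs c).find? fun m => decide (m ∉ rej c)

/-- The set of candidates currently applying to institution `m`. -/
def applicants (prefs : α → List β) (rej : α → Finset β) (m : β) : Finset α :=
  Finset.univ.filter fun c => applyTo prefs rej c = some m

/-- One round of candidate-proposing deferred acceptance: each candidate applies to her
most-preferred not-yet-rejecting institution; each institution keeps its choice from its
applicants and rejects the rest. `rej c` is the set of institutions that have rejected `c`. -/
def daRound (Ch : β → Finset α → Finset α) (prefs : α → List β) (rej : α → Finset β) :
    α → Finset β := fun c =>
  match applyTo prefs rej c with
  | none => rej c
  | some m => if c ∈ Ch m (applicants prefs rej m) then rej c else insert m (rej c)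

variable [Fintype β]

/-- The rejection sets at the end of candidate-proposing deferred acceptance (running enough
rounds to guarantee that a fixed point, i.e. a round with no rejections, has been reached). -/
def daRej (Ch : β → Finset α → Finset α) (prefs : α → List β) : α → Finset β :=
  (daRound Ch prefs)^[Fintype.card α * Fintype.card β + 1] fun _ => ∅

/-- The matching produced by candidate-proposing deferred acceptance. -/
def daMatch (Ch : β → Finset α → Finset α) (prefs : α → List β) : α → Option β :=
  applyTo prefs (daRej Ch prefs)

end DA

section Stability

variable {β : Type*} [DecidableEq β]

/-- Candidate `c` strictly prefers institution `m` to the assignment `o`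
(being unmatched, `none`, is worse than any institution on her list). -/
def Prefers (prefs : α → List β) (c : α) (m : β) : Option β → Prop
  | none => m ∈ prefs c
  | some m' => m ∈ prefs c ∧ (prefs c).idxOf m < (prefs c).idxOf m'

/-- Candidate `c` weakly prefers assignment `o` to assignment `o'`. -/
def WeaklyPrefers (prefs : α → List β) (c : α) (o o' : Option β) : Prop :=
  o = o' ∨ ∃ m, o = some m ∧ Prefers prefs c m o'

variable [Fintype α]

/-- The set of candidates assigned to institution `m` by the matching `M`. -/
def assignedTo (M : α → Option β) (m : β) : Finset α :=
  Finset.univ.filter fun c => M c = some m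

/-- Individual rationality: candidates are matched only to listed institutions, and each
institution chooses all candidates assigned to it. -/
def IndivRational (Ch : β → Finset α → Finset α) (prefs : α → List β) (M : α → Option β) :
    Prop :=
  (∀ c m, M c = some m → m ∈ prefs c) ∧ ∀ m, Ch m (assignedTo M m) = assignedTo M m

/-- `(c, m)` is a blocking pair for the matching `M`. -/
def Blocks (Ch : β → Finset α → Finset α) (prefs : α → List β) (M : α → Option β)
    (c : α) (m : β) : Prop :=
  Prefers prefs c m (M c) ∧ c ∈ Ch m (insert c (assignedTo M m))

/-- Stability: individual rationality plus no blocking pairs. -/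
def StableMatching (Ch : β → Finset α → Finset α) (prefs : α → List β) (M : α → Option β) :
    Prop :=
  IndivRational Ch prefs M ∧ ∀ c m, ¬ Blocks Ch prefs M c m

/-- One step of the candidate-Pareto-improvement stage: a blocking pair `(m, c)` such that
`c` can be added to `m` without rejecting anyone is resolved by assigning `c` to `m`. -/
def ParetoStep [DecidableEq α] (Ch : β → Finset α → Finset α) (prefs : α → List β)
    (M M' : α → Option β) : Prop :=
  ∃ m c, Prefers prefs c m (M c) ∧
    Ch m (insert c (assignedTo M m)) = insert c (assignedTo M m) ∧
    M' = Function.update M c (some m)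

end Stability

end PMA


open PMA

section AuxProofs

variable {α : Type*} [DecidableEq α]

lemma feasible_mono (maxQ : List (Pop α)) {S S' : Finset α} (h : S ⊆ S')
    (hF : Feasible maxQ S') : Feasible maxQ S := fun q hq =>
  le_trans (Finset.card_le_card (Finset.inter_subset_inter h (Finset.Subset.refl _))) (hF q hq)

lemma helps_mono (minT : List (Pop α)) {S S' : Finset α} (h : S ⊆ S') {c : α}
    (hc : HelpsMin minT S' c) : HelpsMin minT S c := by
  obtain ⟨p, hp, hcp, hlt⟩ := hc
  exact ⟨p, hp, hcp, lt_of_le_of_lt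
    (Finset.card_le_card (Finset.inter_subset_inter h (Finset.Subset.refl _))) hlt⟩

lemma pass1_cons (maxQ minT : List (Pop α)) (c : α) (rest : List α) (S : Finset α) :
    pass1 maxQ minT (c :: rest) S =
      if HelpsMin minT S c ∧ Feasible maxQ (insert c S) then
        pass1 maxQ minT rest (insert c S)
      else pass1 maxQ minT rest S := rfl

lemma pass2_cons (maxQ : List (Pop α)) (c : α) (rest : List α) (S : Finset α) :
    pass2 maxQ (c :: rest) S =
      if Feasible maxQ (insert c S) then pass2 maxQ rest (insert c S)
      else pass2 maxQ rest S := rfl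

lemma pass1_append (maxQ minT : List (Pop α)) :
    ∀ (X Y : List α) (S : Finset α),
      pass1 maxQ minT (X ++ Y) S = pass1 maxQ minT Y (pass1 maxQ minT X S)
  | [], _, _ => rfl
  | c :: X, Y, S => by
    rw [List.cons_append, pass1_cons, pass1_cons]
    split <;> exact pass1_append maxQ minT X Y _

lemma pass2_append (maxQ : List (Pop α)) :
    ∀ (X Y : List α) (S : Finset α),
      pass2 maxQ (X ++ Y) S = pass2 maxQ Y (pass2 maxQ X S)
  | [], _, _ => rfl
  | c :: X, Y, S => by
    rw [List.cons_append, pass2_cons, pass2_cons]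
    split <;> exact pass2_append maxQ X Y _

lemma pass1_subset (maxQ minT : List (Pop α)) :
    ∀ (L : List α) (S : Finset α), S ⊆ pass1 maxQ minT L S
  | [], S => Finset.Subset.refl S
  | c :: L, S => by
    rw [pass1_cons]; split
    · exact (Finset.subset_insert c S).trans (pass1_subset maxQ minT L _)
    · exact pass1_subset maxQ minT L S

lemma pass2_subset (maxQ : List (Pop α)) :
    ∀ (L : List α) (S : Finset α), S ⊆ pass2 maxQ L S
  | [], S => Finset.Subset.refl S
  | c :: L, S => by
    rw [pass2_cons]; split
    · exact (Finset.subset_insert c S).trans (pass2_subset maxQ L _)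
    · exact pass2_subset maxQ L S

lemma pass1_feasible (maxQ minT : List (Pop α)) :
    ∀ (L : List α) {S : Finset α}, Feasible maxQ S → Feasible maxQ (pass1 maxQ minT L S)
  | [], _, h => h
  | c :: L, S, h => by
    rw [pass1_cons]; split
    · next hcond => exact pass1_feasible maxQ minT L hcond.2
    · exact pass1_feasible maxQ minT L h

lemma pass2_feasible (maxQ : List (Pop α)) :
    ∀ (L : List α) {S : Finset α}, Feasible maxQ S → Feasible maxQ (pass2 maxQ L S)
  | [], _, h => h
  | c :: L, S, h => by
    rw [pass2_cons]; split
    · next hcond => exact pass2_feasible maxQ L hcond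
    · exact pass2_feasible maxQ L h

lemma pass1_skip (maxQ minT : List (Pop α)) {S₀ : Finset α} :
    ∀ (A : List α), (∀ a ∈ A, ¬ HelpsMin minT S₀ a) → ∀ {S : Finset α}, S₀ ⊆ S →
      pass1 maxQ minT A S = S
  | [], _, _, _ => rfl
  | a :: A, hA, S, hsub => by
    rw [pass1_cons, if_neg,
      pass1_skip maxQ minT A (fun x hx => hA x (List.mem_cons_of_mem _ hx)) hsub]
    rintro ⟨hh, -⟩
    exact hA a List.mem_cons_self (helps_mono minT hsub hh)

lemma helps_iff (minT : List (Pop α)) (S : Finset α) (c : α) :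
    HelpsMin minT S c ↔ 0 < nUnmet minT S c := by
  rw [nUnmet, List.length_pos_iff_exists_mem]
  constructor
  · rintro ⟨p, hp, h1, h2⟩
    exact ⟨p, List.mem_filter.mpr ⟨hp, by simp [h1, h2]⟩⟩
  · rintro ⟨p, hp⟩
    rcases List.mem_filter.mp hp with ⟨h1, h2⟩
    simp only [decide_eq_true_eq] at h2
    exact ⟨p, h1, h2.1, h2.2⟩

lemma nUnmet_le_one {minT : List (Pop α)}
    (hdisj : minT.Pairwise fun p q => 0 < p.2 → 0 < q.2 → Disjoint p.1 q.1)
    (S : Finset α) (c : α) : nUnmet minT S c ≤ 1 := by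
  have key : ∀ F : List (Pop α),
      F.Pairwise (fun p q => 0 < p.2 → 0 < q.2 → Disjoint p.1 q.1) →
      (∀ p ∈ F, c ∈ p.1 ∧ 0 < p.2) → F.length ≤ 1 := by
    rintro (- | ⟨p, - | ⟨q, t⟩⟩) hpw hmem
    · simp
    · simp
    · exfalso
      have hpq := (List.pairwise_cons.mp hpw).1 q List.mem_cons_self
      obtain ⟨hp1, hp2⟩ := hmem p List.mem_cons_self
      obtain ⟨hq1, hq2⟩ := hmem q (List.mem_cons_of_mem _ List.mem_cons_self)
      exact (Finset.disjoint_left.mp (hpq hp2 hq2) hp1) hq1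
  rw [nUnmet]
  refine key _ (hdisj.sublist List.filter_sublist) ?_
  intro p hp
  have h2 := (List.mem_filter.mp hp).2
  simp only [decide_eq_true_eq] at h2
  exact ⟨h2.1, lt_of_le_of_lt (Nat.zero_le _) h2.2⟩

variable [LinearOrder α]

lemma bestSet_eq_filter {minT : List (Pop α)}
    (hdisj : minT.Pairwise fun p q => 0 < p.2 → 0 < q.2 → Disjoint p.1 q.1)
    (S R : Finset α) (hex : ∃ x ∈ R, HelpsMin minT S x) :
    bestSet minT S R = R.filter fun c => HelpsMin minT S c := by
  obtain ⟨x0, hx0, hhx0⟩ := hex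
  ext c
  simp only [bestSet, Finset.mem_filter]
  constructor
  · rintro ⟨hc, hall⟩
    refine ⟨hc, (helps_iff _ _ _).mpr ?_⟩
    exact lt_of_lt_of_le ((helps_iff _ _ _).mp hhx0) (hall x0 hx0)
  · rintro ⟨hc, hh⟩
    exact ⟨hc, fun d _ => le_trans (nUnmet_le_one hdisj S d) ((helps_iff _ _ _).mp hh)⟩

lemma bestSet_eq_self (minT : List (Pop α)) (S R : Finset α)
    (hex : ∀ x ∈ R, ¬ HelpsMin minT S x) :
    bestSet minT S R = R := by
  ext c
  simp only [bestSet, Finset.mem_filter]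
  refine ⟨fun h => h.1, fun hc => ⟨hc, fun d hd => ?_⟩⟩
  have hd0 : nUnmet minT S d = 0 := by
    by_contra h
    exact hex d hd ((helps_iff _ _ _).mpr (Nat.pos_of_ne_zero h))
  simp [hd0]

lemma main_lemma (maxQ minT : List (Pop α))
    (hdisj : minT.Pairwise fun p q => 0 < p.2 → 0 < q.2 → Disjoint p.1 q.1) :
    ∀ (n : ℕ) (L : List α), L.length ≤ n → L.Pairwise (· < ·) →
      ∀ S : Finset α, Feasible maxQ S →
      choice2Go maxQ minT L.toFinset S = pass2 maxQ L (pass1 maxQ minT L S) := by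
  intro n
  induction n with
  | zero =>
    intro L hlen _ S _
    have hL : L = [] := List.length_eq_zero_iff.mp (Nat.le_zero.mp hlen)
    subst hL
    rw [choice2Go]
    simp [pass1, pass2]
  | succ n ih =>
    intro L hlen hsort S hS
    rcases eq_or_ne L [] with rfl | hL
    · rw [choice2Go]; simp [pass1, pass2]
    have hR : L.toFinset.Nonempty := by
      rcases List.exists_mem_of_ne_nil L hL with ⟨a, ha⟩
      exact ⟨a, List.mem_toFinset.mpr ha⟩
    rw [choice2Go, dif_pos hR]
    set c := pick minT S hR with hcdef
    have hcR : c ∈ L.toFinset := pick_mem minT S hR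
    have hcL : c ∈ L := List.mem_toFinset.mp hcR
    obtain ⟨A, B, hdecomp⟩ := List.append_of_mem hcL
    have hnodup : L.Nodup := hsort.nodup
    have hAlt : ∀ a ∈ A, a < c := by
      have h := hsort
      rw [hdecomp, List.pairwise_append] at h
      exact fun a ha => h.2.2 a ha c List.mem_cons_self
    have hcA : c ∉ A := fun h => lt_irrefl c (hAlt c h)
    have hcB : c ∉ B := by
      have h := hnodup
      rw [hdecomp] at h
      exact List.Nodup.notMem ((List.nodup_append.mp h).2.1) -- nodup (c::B) → c ∉ B
    set S' := (if Feasible maxQ (insert c S) then insert c S else S) with hS'def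
    have hSS' : S ⊆ S' := by
      rw [hS'def]; split
      · exact Finset.subset_insert _ _
      · exact Finset.Subset.refl _
    have hS'F : Feasible maxQ S' := by
      rw [hS'def]; split
      · next h => exact h
      · exact hS
    by_cases hex : ∃ x ∈ L.toFinset, HelpsMin minT S x
    · -- some remaining candidate helps an unmet target
      have hbs : bestSet minT S L.toFinset
          = L.toFinset.filter fun x => HelpsMin minT S x := bestSet_eq_filter hdisj S _ hex
      have hcmem : c ∈ bestSet minT S L.toFinset := Finset.min'_mem _ _
      have hHc : HelpsMin minT S c := by
        rw [hbs] at hcmem; exact (Finset.mem_filter.mp hcmem).2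
      have hcmin : ∀ x ∈ L.toFinset, HelpsMin minT S x → c ≤ x := fun x hx hhx =>
        Finset.min'_le _ _ (by rw [hbs]; exact Finset.mem_filter.mpr ⟨hx, hhx⟩)
      have hAnh : ∀ a ∈ A, ¬ HelpsMin minT S a := fun a ha hha => by
        have haL : a ∈ L.toFinset :=
          List.mem_toFinset.mpr (by rw [hdecomp]; exact List.mem_append_left _ ha)
        exact absurd (hcmin a haL hha) (not_le.mpr (hAlt a ha))
      have herase : L.toFinset.erase c = (A ++ B).toFinset := by
        ext x
        simp only [Finset.mem_erase, List.mem_toFinset, hdecomp, List.mem_append,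
          List.mem_cons]
        constructor
        · rintro ⟨hne, hA' | (rfl | hB')⟩
          · exact Or.inl hA'
          · exact absurd rfl hne
          · exact Or.inr hB'
        · rintro (hA' | hB')
          · exact ⟨fun h => hcA (h ▸ hA'), Or.inl hA'⟩
          · exact ⟨fun h => hcB (h ▸ hB'), Or.inr (Or.inr hB')⟩
      have hp1 : pass1 maxQ minT L S = pass1 maxQ minT B S' := by
        rw [hdecomp, pass1_append,
          pass1_skip maxQ minT A hAnh (Finset.Subset.refl S), pass1_cons, hS'def]
        by_cases hfc : Feasible maxQ (insert c S)
        · rw [if_pos ⟨hHc, hfc⟩, if_pos hfc]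
        · rw [if_neg (fun h => hfc h.2), if_neg hfc]
      have hlen' : (A ++ B).length ≤ n := by
        have : L.length = (A ++ B).length + 1 := by
          rw [hdecomp]; simp [List.length_append]; omega
        omega
      have hsort' : (A ++ B).Pairwise (· < ·) := by
        have hsub : (A ++ B).Sublist L := by
          rw [hdecomp]
          exact (List.sublist_cons_self c B).append_left A
        exact hsort.sublist hsub
      have hIH := ih (A ++ B) hlen' hsort' S' hS'F
      rw [herase, hIH]
      have hp1' : pass1 maxQ minT (A ++ B) S' = pass1 maxQ minT B S' := by
        rw [pass1_append, pass1_skip maxQ minT A hAnh hSS']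
      rw [hp1', hp1]
      set T := pass1 maxQ minT B S' with hT
      have hS'T : S' ⊆ T := pass1_subset _ _ _ _
      rw [hdecomp, pass2_append, pass2_append]
      set U := pass2 maxQ A T with hU
      have hTU : T ⊆ U := pass2_subset _ _ _
      have hUF : Feasible maxQ U :=
        pass2_feasible _ _ (pass1_feasible _ _ _ hS'F)
      by_cases hfc : Feasible maxQ (insert c S)
      · have hcS' : c ∈ S' := by rw [hS'def, if_pos hfc]; exact Finset.mem_insert_self _ _
        have hcU : c ∈ U := hTU (hS'T hcS')
        rw [pass2_cons, Finset.insert_eq_self.mpr hcU, if_pos hUF]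
      · have hnf : ¬ Feasible maxQ (insert c U) := fun h =>
          hfc (feasible_mono maxQ (Finset.insert_subset_insert c (hSS'.trans (hS'T.trans hTU))) h)
        rw [pass2_cons, if_neg hnf]
    · -- no remaining candidate helps
      push_neg at hex
      have hbs := bestSet_eq_self minT S L.toFinset hex
      have hcmin : ∀ x ∈ L.toFinset, c ≤ x := fun x hx =>
        Finset.min'_le _ _ (by rw [hbs]; exact hx)
      have hA : A = [] := by
        rcases A with - | ⟨a, A'⟩
        · rfl
        · exfalso
          have haL : a ∈ L.toFinset := by
            rw [hdecomp]; simp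
          exact absurd (hcmin a haL) (not_le.mpr (hAlt a List.mem_cons_self))
      subst hA
      rw [List.nil_append] at hdecomp
      have herase : L.toFinset.erase c = B.toFinset := by
        ext x
        simp only [Finset.mem_erase, List.mem_toFinset, hdecomp, List.mem_cons]
        constructor
        · rintro ⟨hne, rfl | hB'⟩
          · exact absurd rfl hne
          · exact hB'
        · intro hB'
          exact ⟨fun h => hcB (h ▸ hB'), Or.inr hB'⟩
      have hlen' : B.length ≤ n := by
        have : L.length = B.length + 1 := by rw [hdecomp]; simp
        omega
      have hsort' : B.Pairwise (· < ·) := by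
        have h := hsort
        rw [hdecomp] at h
        exact (List.pairwise_cons.mp h).2
      have hIH := ih B hlen' hsort' S' hS'F
      rw [herase, hIH]
      have hBnh : ∀ b ∈ B, ¬ HelpsMin minT S b := fun b hb =>
        hex b (by rw [hdecomp]; simp [hb])
      have hB1 : pass1 maxQ minT B S' = S' := pass1_skip maxQ minT B hBnh hSS'
      have hL1 : pass1 maxQ minT L S = S := by
        refine pass1_skip maxQ minT L ?_ (Finset.Subset.refl S)
        intro a ha
        exact hex a (List.mem_toFinset.mpr ha)
      rw [hB1, hL1, hdecomp, pass2_cons, hS'def]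
      by_cases hfc : Feasible maxQ (insert c S)
      · rw [if_pos hfc, if_pos hfc]
      · rw [if_neg hfc, if_neg hfc]

end AuxProofs

/-- When all populations with positive minimum targets are pairwise
disjoint, Algorithm 1 (uniform promotion) and Algorithm 2 (graded promotion) choose the
same subset from every candidate set. -/
theorem choice1_eq_choice2 {α : Type*} [DecidableEq α] [LinearOrder α]
    (maxQ minT : List (Pop α))
    (hdisj : minT.Pairwise fun p q => 0 < p.2 → 0 < q.2 → Disjoint p.1 q.1)
    (C : Finset α) :
    choice1 maxQ minT (C.sort (· ≤ ·)) C = choice2 maxQ minT C := by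
  have hfilter : (C.sort (· ≤ ·)).filter (fun c => decide (c ∈ C)) = C.sort (· ≤ ·) :=
    List.filter_eq_self.mpr fun a ha => by
      simpa using (Finset.mem_sort (α := α) (· ≤ ·)).mp ha
  have hfeas : Feasible maxQ (∅ : Finset α) := by
    intro q hq; simp
  have h := main_lemma maxQ minT hdisj (C.sort (· ≤ ·)).length (C.sort (· ≤ ·)) le_rfl
    (Finset.sortedLT_sort C).pairwise ∅ hfeas
  rw [Finset.sort_toFinset] at h
  rw [choice1, hfilter, choice2]
  exact h.symm
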